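/- Let W be a complex vector space with dim W = k ≥ 3, let E be a one-dimensional complex vector space, and set V̄ = W ⊕ E. Let 𝔩 ⊆ sl(V̄) be a Lie subalgebra containing sl(W) (acting trivially on E) and containing an element ξ whose projections to both of the sl(W)-isotypic components W ⊗ E* and E ⊗ W* of End(V̄) are nonzero. Then 𝔩 = sl(V̄). -/

import Mathlib

open Module LinearMap

attribute [local instance 100] LieRing.ofAssociativeRing

namespace Stmt11Aux

variable {W : Type*} [AddCommGroup W] [Module ℂ W] [FiniteDimensional ℂ W]

/-- Off-diagonal block map `(w,t) ↦ (t • u, ψ w)`. -/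
noncomputable def Od (u : W) (ψ : W →ₗ[ℂ] ℂ) : Module.End ℂ (W × ℂ) :=
  LinearMap.prod ((toSpanSingleton ℂ W u).comp (snd ℂ W ℂ)) (ψ.comp (fst ℂ W ℂ))

@[simp] lemma Od_apply (u : W) (ψ : W →ₗ[ℂ] ℂ) (x : W × ℂ) :
    Od u ψ x = (x.2 • u, ψ x.1) := rfl

/-- trace of rank-one `smulRight ψ u` is `ψ u`. -/
lemma trace_smulRight' (ψ : W →ₗ[ℂ] ℂ) (u : W) :
    LinearMap.trace ℂ W (smulRight ψ u) = ψ u := by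
  have h1 : (smulRight ψ u : Module.End ℂ W) = (toSpanSingleton ℂ W u) ∘ₗ ψ := by
    ext w; simp [toSpanSingleton_apply]
  rw [h1, trace_comp_comm' ψ (toSpanSingleton ℂ W u)]
  have h2 : ψ ∘ₗ toSpanSingleton ℂ W u = (ψ u) • (1 : Module.End ℂ ℂ) := by
    ext c; simp [toSpanSingleton_apply, mul_comm]
  rw [h2, map_smul, trace_one]
  simp

lemma exists_dual_one {v : W} (hv : v ≠ 0) : ∃ φ : W →ₗ[ℂ] ℂ, φ v = 1 := by
  have := (Module.forall_dual_apply_eq_zero_iff ℂ v).not.mpr hv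
  push_neg at this
  obtain ⟨φ, hφ⟩ := this
  exact ⟨(φ v)⁻¹ • φ, by simp [inv_mul_cancel₀ hφ]⟩

lemma exists_dual_annih (S : Submodule ℂ W) {v : W} (hv : v ∉ S) :
    ∃ φ : W →ₗ[ℂ] ℂ, φ v = 1 ∧ ∀ s ∈ S, φ s = 0 := by
  obtain ⟨f, hf0, hfS⟩ := S.exists_dual_map_eq_bot_of_notMem hv inferInstance
  refine ⟨(f v)⁻¹ • f, by simp [inv_mul_cancel₀ hf0], fun s hs => ?_⟩
  have : f s = 0 := by
    have : f s ∈ S.map f := ⟨s, hs, rfl⟩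
    rwa [hfS, Submodule.mem_bot] at this
  simp [this]

lemma exists_not_mem_of_finrank_lt (S : Submodule ℂ W) (h : finrank ℂ S < finrank ℂ W) :
    ∃ v : W, v ∉ S := by
  by_contra hc
  push_neg at hc
  have : S = ⊤ := by ext x; simp [hc x]
  rw [this, finrank_top] at h
  exact lt_irrefl _ h

/-- For `b ≠ 0` and any `u` there is a trace-zero endomorphism sending `b` to `u`. -/
lemma exists_traceZero_apply (hk : 2 ≤ finrank ℂ W) {b : W} (hb : b ≠ 0) (u : W) :
    ∃ X : Module.End ℂ W, LinearMap.trace ℂ W X = 0 ∧ X b = u := by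
  obtain ⟨φ, hφ⟩ := exists_dual_one hb
  have hsp : finrank ℂ (ℂ ∙ b) < finrank ℂ W := by
    rw [finrank_span_singleton hb]; omega
  obtain ⟨w, hw⟩ := exists_not_mem_of_finrank_lt _ hsp
  obtain ⟨θ, hθw, hθS⟩ := exists_dual_annih (ℂ ∙ b) hw
  have hθb : θ b = 0 := hθS b (Submodule.mem_span_singleton_self b)
  refine ⟨smulRight φ u + smulRight θ ((-(φ u)) • w), ?_, ?_⟩
  · rw [map_add, trace_smulRight', trace_smulRight', map_smul, hθw]
    simp
  · simp [hφ, hθb]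

/-- For `θ ≠ 0` and any `ψ` there is a trace-zero `X` with `θ ∘ X = ψ`. -/
lemma exists_traceZero_comp (hk : 2 ≤ finrank ℂ W) {θ : W →ₗ[ℂ] ℂ} (hθ : θ ≠ 0)
    (ψ : W →ₗ[ℂ] ℂ) :
    ∃ X : Module.End ℂ W, LinearMap.trace ℂ W X = 0 ∧ θ ∘ₗ X = ψ := by
  obtain ⟨x, hx⟩ : ∃ x, θ x ≠ 0 := by
    by_contra hc; push_neg at hc; exact hθ (by ext w; simp [hc w])
  set v := (θ x)⁻¹ • x with hv
  have hθv : θ v = 1 := by simp [hv, inv_mul_cancel₀ hx]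
  -- nonzero kernel vector
  have hker : ∃ z : W, z ≠ 0 ∧ θ z = 0 := by
    by_contra hc
    push_neg at hc
    have hinj : Function.Injective θ := by
      rw [← LinearMap.ker_eq_bot, Submodule.eq_bot_iff]
      intro z hz
      by_contra hz0
      exact hc z hz0 hz
    have := LinearMap.finrank_le_finrank_of_injective hinj
    simp [Module.finrank_self] at this
    omega
  obtain ⟨z, hz0, hθz⟩ := hker
  obtain ⟨χ, hχ⟩ := exists_dual_one hz0
  refine ⟨smulRight ψ v + smulRight ((-(ψ v)) • χ) z, ?_, ?_⟩
  · rw [map_add, trace_smulRight', trace_smulRight']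
    simp [hχ]
  · ext w; simp [hθv, hθz, mul_comm]


lemma lie_lift_Od (X : Module.End ℂ W) (u : W) (ψ : W →ₗ[ℂ] ℂ) :
    ⁅prodMap X (0 : Module.End ℂ ℂ), Od u ψ⁆ = Od (X u) (-(ψ ∘ₗ X)) := by
  rw [Ring.lie_def]
  apply LinearMap.ext
  rintro ⟨w, t⟩
  simp [Module.End.mul_apply]

lemma lie_Od_Od (u : W) (ψ : W →ₗ[ℂ] ℂ) :
    ⁅Od u (0 : W →ₗ[ℂ] ℂ), Od 0 ψ⁆
      = prodMap (smulRight ψ u) ((-(ψ u)) • (1 : Module.End ℂ ℂ)) := by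
  rw [Ring.lie_def]
  apply LinearMap.ext
  rintro ⟨w, t⟩
  simp [Module.End.mul_apply, smul_smul, mul_comm]

lemma pair_split (ξ : Module.End ℂ (W × ℂ)) (w : W) (t : ℂ) :
    ξ (w, t) = ξ (w, 0) + t • ξ (0, 1) := by
  rw [← map_smul, ← map_add]
  congr 1
  simp [Prod.ext_iff]

lemma lie_lift_xi (ξ : Module.End ℂ (W × ℂ)) (X : Module.End ℂ W) :
    ⁅prodMap X (0 : Module.End ℂ ℂ), ξ⁆
      = prodMap (X * ((fst ℂ W ℂ) ∘ₗ (ξ ∘ₗ inl ℂ W ℂ))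
          - ((fst ℂ W ℂ) ∘ₗ (ξ ∘ₗ inl ℂ W ℂ)) * X) 0
        + Od (X (ξ (0, 1)).1) (-(((snd ℂ W ℂ) ∘ₗ (ξ ∘ₗ inl ℂ W ℂ)) ∘ₗ X)) := by
  rw [Ring.lie_def]
  apply LinearMap.ext
  rintro ⟨w, t⟩
  have h1 : ξ (w, t) = ξ (w, 0) + t • ξ (0, 1) := pair_split ξ w t
  simp only [LinearMap.sub_apply, LinearMap.add_apply, Module.End.mul_apply,
    prodMap_apply, Od_apply, LinearMap.comp_apply, inl_apply, fst_apply, snd_apply,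
    LinearMap.zero_apply, LinearMap.neg_apply, h1, map_add, map_smul,
    Prod.fst_add, Prod.snd_add, Prod.smul_fst, Prod.smul_snd, smul_zero, map_zero]
  apply Prod.ext <;> simp <;> abel

lemma eta_decomp (η : Module.End ℂ (W × ℂ)) :
    η = prodMap ((fst ℂ W ℂ) ∘ₗ (η ∘ₗ inl ℂ W ℂ)) ((η (0, 1)).2 • 1)
        + Od (η (0, 1)).1 0 + Od 0 ((snd ℂ W ℂ) ∘ₗ (η ∘ₗ inl ℂ W ℂ)) := by
  apply LinearMap.ext
  rintro ⟨w, t⟩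
  have h1 : η (w, t) = η (w, 0) + t • η (0, 1) := pair_split η w t
  simp only [LinearMap.add_apply, prodMap_apply, Od_apply, LinearMap.comp_apply,
    inl_apply, fst_apply, snd_apply, h1, LinearMap.smul_apply, Module.End.one_apply,
    Prod.fst_add, Prod.snd_add, Prod.smul_fst, Prod.smul_snd]
  apply Prod.ext <;> simp [mul_comm] <;> abel

lemma trace_Od [FiniteDimensional ℂ W] (u : W) (ψ : W →ₗ[ℂ] ℂ) :
    LinearMap.trace ℂ (W × ℂ) (Od u ψ) = 0 := by
  have hdec : Od u ψ = (inl ℂ W ℂ) ∘ₗ ((toSpanSingleton ℂ W u).comp (snd ℂ W ℂ))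
      + (inr ℂ W ℂ) ∘ₗ (ψ.comp (fst ℂ W ℂ)) := by
    apply LinearMap.ext; rintro ⟨w, t⟩; simp [Prod.ext_iff]
  rw [hdec, map_add,
    trace_comp_comm' ((toSpanSingleton ℂ W u).comp (snd ℂ W ℂ)) (inl ℂ W ℂ),
    trace_comp_comm' (ψ.comp (fst ℂ W ℂ)) (inr ℂ W ℂ)]
  have e1 : ((toSpanSingleton ℂ W u).comp (snd ℂ W ℂ)) ∘ₗ (inl ℂ W ℂ) = 0 := by
    ext w; simp
  have e2 : (ψ.comp (fst ℂ W ℂ)) ∘ₗ (inr ℂ W ℂ) = 0 := by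
    ext t; simp
  rw [e1, e2, map_zero, map_zero, add_zero]


lemma finrank_span_singleton_le' (x : W) : finrank ℂ (ℂ ∙ x) ≤ 1 := by
  rcases eq_or_ne x 0 with h | h
  · rw [h, Submodule.span_zero_singleton, finrank_bot]
    omega
  · rw [finrank_span_singleton h]

end Stmt11Aux

open Stmt11Aux LinearMap

/-- Lemma 5.2 (key step): let `V̄ = W ⊕ E` with `dim W = k ≥ 3` and `E = ℂ`
one-dimensional.  If a Lie subalgebra `𝔩` of `sl(V̄)` (trace-zero endomorphisms of
`W × ℂ`) contains `sl(W)` (acting trivially on the `ℂ`-factor) and contains an element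
`ξ` whose off-diagonal blocks `W → E` and `E → W` are both nonzero, then `𝔩` is all of
`sl(V̄)`. -/
theorem stmt_11 {W : Type*} [AddCommGroup W] [Module ℂ W] [FiniteDimensional ℂ W]
    (hk : 3 ≤ Module.finrank ℂ W)
    (𝔩 : LieSubalgebra ℂ (Module.End ℂ (W × ℂ)))
    (h𝔩sl : ∀ η ∈ 𝔩, LinearMap.trace ℂ (W × ℂ) η = 0)
    (hslW : ∀ ξ₀ : Module.End ℂ W, LinearMap.trace ℂ W ξ₀ = 0 →
      LinearMap.prodMap ξ₀ (0 : Module.End ℂ ℂ) ∈ 𝔩)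
    (ξ : Module.End ℂ (W × ℂ)) (hξ : ξ ∈ 𝔩)
    (hWE : ∃ w : W, (ξ (w, 0)).2 ≠ 0)
    (hEW : (ξ (0, 1)).1 ≠ 0) :
    ∀ η : Module.End ℂ (W × ℂ), LinearMap.trace ℂ (W × ℂ) η = 0 → η ∈ 𝔩 := by
  classical
  have hk2 : 2 ≤ finrank ℂ W := by omega
  set b₀ : W := (ξ (0, 1)).1 with hb₀def
  have hb₀ : b₀ ≠ 0 := hEW
  set c₀ : W →ₗ[ℂ] ℂ := (snd ℂ W ℂ) ∘ₗ (ξ ∘ₗ inl ℂ W ℂ) with hc₀def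
  have hc₀app : ∀ w : W, c₀ w = (ξ (w, 0)).2 := fun w => rfl
  have hc₀ : c₀ ≠ 0 := by
    obtain ⟨w, hw⟩ := hWE
    intro h
    apply hw
    rw [← hc₀app, h, LinearMap.zero_apply]
  -- Step 1: for every trace-zero `X`, the pure off-diagonal `Od (X b₀) (-(c₀ ∘ X))` is in `𝔩`.
  have step1 : ∀ X : Module.End ℂ W, LinearMap.trace ℂ W X = 0 →
      Od (X b₀) (-(c₀ ∘ₗ X)) ∈ 𝔩 := by
    intro X hX
    set A₀ : Module.End ℂ W := (fst ℂ W ℂ) ∘ₗ (ξ ∘ₗ inl ℂ W ℂ) with hA₀def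
    have h1 : ⁅prodMap X (0 : Module.End ℂ ℂ), ξ⁆ ∈ 𝔩 := 𝔩.lie_mem (hslW X hX) hξ
    have h3 : prodMap (X * A₀ - A₀ * X) (0 : Module.End ℂ ℂ) ∈ 𝔩 := by
      apply hslW
      rw [map_sub, LinearMap.trace_mul_comm, sub_self]
    have h2 := lie_lift_xi ξ X
    have heq : Od (X b₀) (-(c₀ ∘ₗ X))
        = ⁅prodMap X (0 : Module.End ℂ ℂ), ξ⁆ - prodMap (X * A₀ - A₀ * X) 0 := by
      rw [h2, ← hA₀def, ← hc₀def, ← hb₀def]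
      abel
    rw [heq]
    exact sub_mem h1 h3
  -- Step 2: double brackets.
  have step2 : ∀ X X' : Module.End ℂ W, LinearMap.trace ℂ W X = 0 →
      LinearMap.trace ℂ W X' = 0 → Od (X' (X b₀)) ((c₀ ∘ₗ X) ∘ₗ X') ∈ 𝔩 := by
    intro X X' hX hX'
    have h1 : ⁅prodMap X' (0 : Module.End ℂ ℂ), Od (X b₀) (-(c₀ ∘ₗ X))⁆ ∈ 𝔩 :=
      𝔩.lie_mem (hslW X' hX') (step1 X hX)
    rwa [lie_lift_Od, LinearMap.neg_comp, neg_neg] at h1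
  -- Step 3: a nonzero `Od v 0` in `𝔩`.
  have step3 : ∃ v : W, v ≠ 0 ∧ Od v (0 : W →ₗ[ℂ] ℂ) ∈ 𝔩 := by
    obtain ⟨X, hXtr, hXb⟩ := exists_traceZero_apply hk2 hb₀ b₀
    set f : W →ₗ[ℂ] ℂ := c₀ ∘ₗ X with hfdef
    -- find `v ∈ ker f` outside the span of `b₀`
    have hkerf : ∃ v : W, f v = 0 ∧ v ∉ (ℂ ∙ b₀) := by
      by_contra hcon
      push_neg at hcon
      have hle : LinearMap.ker f ≤ (ℂ ∙ b₀) := fun z hz => hcon z (LinearMap.mem_ker.mp hz)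
      have h1 : finrank ℂ (LinearMap.ker f) ≤ 1 := by
        have := Submodule.finrank_mono hle
        rwa [finrank_span_singleton hb₀] at this
      have h2 : finrank ℂ (LinearMap.range f) ≤ 1 := by
        have := (LinearMap.range f).finrank_le
        simpa using this
      have := LinearMap.finrank_range_add_finrank_ker f
      omega
    obtain ⟨v, hfv, hvb⟩ := hkerf
    have hv0 : v ≠ 0 := fun h => hvb (h ▸ Submodule.zero_mem _)
    have hbv : b₀ ∉ (ℂ ∙ v) := by
      intro hmem
      obtain ⟨a, ha⟩ := Submodule.mem_span_singleton.mp hmem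
      rcases eq_or_ne a 0 with h0 | h0
      · exact hb₀ (by rw [← ha, h0, zero_smul])
      · exact hvb (Submodule.mem_span_singleton.mpr ⟨a⁻¹, by rw [← ha, smul_smul,
          inv_mul_cancel₀ h0, one_smul]⟩)
    obtain ⟨θ, hθb, hθv⟩ := exists_dual_annih (ℂ ∙ v) hbv
    have hθv0 : θ v = 0 := hθv v (Submodule.mem_span_singleton_self v)
    set X' : Module.End ℂ W := smulRight θ v with hX'def
    have hX'tr : LinearMap.trace ℂ W X' = 0 := by rw [hX'def, trace_smulRight', hθv0]
    have h2 := step2 X X' hXtr hX'tr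
    have e1 : X' (X b₀) = v := by rw [hX'def, smulRight_apply, hXb, hθb, one_smul]
    have e2 : (c₀ ∘ₗ X) ∘ₗ X' = 0 := by
      ext w
      simp only [LinearMap.comp_apply, hX'def, smulRight_apply, map_smul, LinearMap.zero_apply]
      rw [show c₀ (X v) = 0 from hfv, smul_zero]
    rw [e1, e2] at h2
    exact ⟨v, hv0, h2⟩
  -- Step 4: a nonzero `Od 0 ψ` in `𝔩`.
  have step4 : ∃ ψ : W →ₗ[ℂ] ℂ, ψ ≠ 0 ∧ Od (0 : W) ψ ∈ 𝔩 := by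
    obtain ⟨X, hXtr, hXc⟩ := exists_traceZero_comp hk2 hc₀ c₀
    obtain ⟨x, hx⟩ : ∃ x : W, c₀ x ≠ 0 := by
      by_contra hcon; push_neg at hcon; exact hc₀ (by ext w; simp [hcon w])
    have hXx : c₀ (X x) ≠ 0 := by
      have h : (c₀ ∘ₗ X) x = c₀ x := by rw [hXc]
      rw [LinearMap.comp_apply] at h
      rw [h]; exact hx
    set m : W := X b₀ with hmdef
    -- a functional vanishing on `x` and `m`
    have hS : finrank ℂ ((ℂ ∙ x) ⊔ (ℂ ∙ m) : Submodule ℂ W) < finrank ℂ W := by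
      have h1 : finrank ℂ ((ℂ ∙ x) ⊔ (ℂ ∙ m) : Submodule ℂ W)
          ≤ finrank ℂ (ℂ ∙ x) + finrank ℂ (ℂ ∙ m) := by
        have := Submodule.finrank_sup_add_finrank_inf_eq (ℂ ∙ x) (ℂ ∙ m)
        omega
      have h2 : finrank ℂ (ℂ ∙ x) ≤ 1 := finrank_span_singleton_le' x
      have h3 : finrank ℂ (ℂ ∙ m) ≤ 1 := finrank_span_singleton_le' m
      omega
    obtain ⟨w, hw⟩ := exists_not_mem_of_finrank_lt _ hS
    obtain ⟨θ, hθw, hθS⟩ := exists_dual_annih _ hw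
    have hθx : θ x = 0 := hθS x (le_sup_left (a := (ℂ ∙ x)) (Submodule.mem_span_singleton_self x))
    have hθm : θ m = 0 := hθS m (le_sup_right (a := (ℂ ∙ x)) (Submodule.mem_span_singleton_self m))
    have hθ0 : θ ≠ 0 := fun h => by rw [h, LinearMap.zero_apply] at hθw; exact one_ne_zero hθw.symm
    set X' : Module.End ℂ W := smulRight θ x with hX'def
    have hX'tr : LinearMap.trace ℂ W X' = 0 := by rw [hX'def, trace_smulRight', hθx]
    have h2 := step2 X X' hXtr hX'tr
    have e1 : X' (X b₀) = 0 := by rw [hX'def, smulRight_apply, ← hmdef, hθm, zero_smul]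
    have e2 : (c₀ ∘ₗ X) ∘ₗ X' = (c₀ (X x)) • θ := by
      ext w'
      simp [hX'def, smulRight_apply, map_smul, mul_comm]
    rw [e1, e2] at h2
    exact ⟨(c₀ (X x)) • θ, smul_ne_zero hXx hθ0, h2⟩
  -- Step 5: all `Od u 0` are in `𝔩`.
  have step5 : ∀ u : W, Od u (0 : W →ₗ[ℂ] ℂ) ∈ 𝔩 := by
    obtain ⟨v, hv0, hv⟩ := step3
    intro u
    obtain ⟨X, hXtr, hXv⟩ := exists_traceZero_apply hk2 hv0 u
    have h1 : ⁅prodMap X (0 : Module.End ℂ ℂ), Od v (0 : W →ₗ[ℂ] ℂ)⁆ ∈ 𝔩 :=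
      𝔩.lie_mem (hslW X hXtr) hv
    rwa [lie_lift_Od, hXv, LinearMap.zero_comp, neg_zero] at h1
  -- Step 6: all `Od 0 ψ` are in `𝔩`.
  have step6 : ∀ ψ : W →ₗ[ℂ] ℂ, Od (0 : W) ψ ∈ 𝔩 := by
    obtain ⟨θ, hθ0, hθ⟩ := step4
    intro ψ
    obtain ⟨X, hXtr, hXθ⟩ := exists_traceZero_comp hk2 hθ0 (-ψ)
    have h1 : ⁅prodMap X (0 : Module.End ℂ ℂ), Od (0 : W) θ⁆ ∈ 𝔩 :=
      𝔩.lie_mem (hslW X hXtr) hθ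
    rwa [lie_lift_Od, map_zero, hXθ, neg_neg] at h1
  -- Step 7: the diagonal elements.
  have step7 : ∀ (A : Module.End ℂ W) (d : ℂ), LinearMap.trace ℂ W A + d = 0 →
      prodMap A (d • (1 : Module.End ℂ ℂ)) ∈ 𝔩 := by
    have hnt : Nontrivial W := by
      apply Module.nontrivial_of_finrank_pos (R := ℂ)
      omega
    obtain ⟨u₁, hu₁⟩ := exists_ne (0 : W)
    obtain ⟨φ, hφ⟩ := exists_dual_one hu₁
    set ψ₁ : W →ₗ[ℂ] ℂ := -φ with hψ₁def
    have hψ₁u : ψ₁ u₁ = -1 := by rw [hψ₁def, LinearMap.neg_apply, hφ]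
    have hT : prodMap (smulRight ψ₁ u₁) ((1 : ℂ) • (1 : Module.End ℂ ℂ)) ∈ 𝔩 := by
      have := 𝔩.lie_mem (step5 u₁) (step6 ψ₁)
      rwa [lie_Od_Od, hψ₁u, neg_neg] at this
    intro A d htr
    have hmem : prodMap (A - d • smulRight ψ₁ u₁) (0 : Module.End ℂ ℂ) ∈ 𝔩 := by
      apply hslW
      rw [map_sub, map_smul, trace_smulRight', hψ₁u]
      simp only [smul_eq_mul, mul_neg_one, sub_neg_eq_add]
      exact htr
    have heq : prodMap A (d • (1 : Module.End ℂ ℂ))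
        = d • prodMap (smulRight ψ₁ u₁) ((1 : ℂ) • (1 : Module.End ℂ ℂ))
          + prodMap (A - d • smulRight ψ₁ u₁) (0 : Module.End ℂ ℂ) := by
      apply LinearMap.ext
      rintro ⟨w, t⟩
      simp [Prod.ext_iff, smul_smul]
    rw [heq]
    exact add_mem (𝔩.smul_mem d hT) hmem
  -- Conclusion.
  intro η hη
  set Aη : Module.End ℂ W := (fst ℂ W ℂ) ∘ₗ (η ∘ₗ inl ℂ W ℂ) with hAdef
  set cη : W →ₗ[ℂ] ℂ := (snd ℂ W ℂ) ∘ₗ (η ∘ₗ inl ℂ W ℂ) with hcdef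
  set bη : W := (η (0, 1)).1 with hbdef
  set dη : ℂ := (η (0, 1)).2 with hddef
  have hdecomp := eta_decomp η
  rw [← hAdef, ← hcdef, ← hbdef, ← hddef] at hdecomp
  have htr : LinearMap.trace ℂ W Aη + dη = 0 := by
    have h1 := hη
    rw [hdecomp, map_add, map_add, trace_Od, trace_Od, LinearMap.trace_prodMap',
      map_smul, LinearMap.trace_one] at h1
    simpa [Module.finrank_self] using h1
  rw [hdecomp]
  exact add_mem (add_mem (step7 Aη dη htr) (step5 bη)) (step6 cη)
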